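/- Let R be a Noetherian commutative ring of prime characteristic p and I an ideal of R. Then there exists a positive integer c such that for every q = p^e and every minimal prime P over I, the isolated primary component Q = I^{[q]} R_P ∩ R of the Frobenius power I^{[q]} satisfies P^{c·q} ⊆ Q. -/
import Mathlib

open Ideal Pointwise

section Aux

variable {R : Type*} [CommRing R]

/-- The saturation of `I` at a prime `P`: elements `x` with `s * x ∈ I` for some `s ∉ P`. -/
def satAt (I P : Ideal R) (hP : P.IsPrime) : Ideal R where
  carrier := {x | ∃ s, s ∉ P ∧ s * x ∈ I}
  add_mem' := by
    rintro a b ⟨s, hs, hsa⟩ ⟨t, ht, htb⟩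
    refine ⟨s * t, fun h => (hP.mem_or_mem h).elim hs ht, ?_⟩
    have : s * t * (a + b) = t * (s * a) + s * (t * b) := by ring
    rw [this]
    exact I.add_mem (I.mul_mem_left _ hsa) (I.mul_mem_left _ htb)
  zero_mem' :=
    ⟨1, fun h => hP.ne_top ((Ideal.eq_top_iff_one P).mpr h), by simpa using I.zero_mem⟩
  smul_mem' := by
    rintro r x ⟨s, hs, hsx⟩
    refine ⟨s, hs, ?_⟩
    rw [smul_eq_mul, show s * (r * x) = r * (s * x) by ring]
    exact I.mul_mem_left _ hsx

lemma mem_satAt {I P : Ideal R} {hP : P.IsPrime} {x : R} :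
    x ∈ satAt I P hP ↔ ∃ s, s ∉ P ∧ s * x ∈ I := Iff.rfl

lemma le_radical_satAt {I P : Ideal R} (hmin : P ∈ I.minimalPrimes) :
    P ≤ (satAt I P hmin.1.1).radical := by
  have hP : P.IsPrime := hmin.1.1
  have hone : (1 : R) ∉ P := fun h => hP.ne_top ((Ideal.eq_top_iff_one P).mpr h)
  intro x hx
  by_contra hcon
  set T : Submonoid R :=
    { carrier := {r | ∃ s k, s ∉ P ∧ r = s * x ^ k}
      mul_mem' := by
        rintro a b ⟨s, k, hs, rfl⟩ ⟨t, l, ht, rfl⟩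
        exact ⟨s * t, k + l, fun h => (hP.mem_or_mem h).elim hs ht, by ring⟩
      one_mem' := ⟨1, 0, hone, by ring⟩ } with hT
  have hdisj : Disjoint (I : Set R) (T : Set R) := by
    rw [Set.disjoint_left]
    rintro r hrI ⟨s, k, hs, rfl⟩
    exact hcon (Ideal.mem_radical_iff.mpr ⟨k, ⟨s, hs, hrI⟩⟩)
  obtain ⟨Q, hQprime, hIQ, hQdisj⟩ := Ideal.exists_le_prime_disjoint I T hdisj
  have hQP : Q ≤ P := by
    intro y hyQ
    by_contra hyP
    exact (Set.disjoint_left.mp hQdisj hyQ) ⟨y, 0, hyP, by ring⟩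
  have hPQ : P ≤ Q := hmin.2 ⟨hQprime, hIQ⟩ hQP
  exact (Set.disjoint_left.mp hQdisj (hPQ hx)) ⟨1, 1, hone, by ring⟩

lemma exists_count_ge {α : Type*} [DecidableEq α] (t : Finset α) (m : Multiset α)
    (hsub : ∀ x ∈ m, x ∈ t) (q : ℕ) (hcard : t.card * (q - 1) + 1 ≤ Multiset.card m) :
    ∃ a ∈ t, q ≤ m.count a := by
  by_contra hcon
  push_neg at hcon
  have h1 : Multiset.card m = ∑ a ∈ m.toFinset, m.count a :=
    (Multiset.toFinset_sum_count_eq m).symm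
  have h2 : m.toFinset ⊆ t := fun a ha => hsub a (Multiset.mem_toFinset.mp ha)
  have h3 : Multiset.card m ≤ ∑ a ∈ t, m.count a := by
    rw [h1]
    exact Finset.sum_le_sum_of_subset h2
  have h4 : ∑ a ∈ t, m.count a ≤ ∑ _a ∈ t, (q - 1) :=
    Finset.sum_le_sum fun a ha => Nat.le_sub_one_of_lt (hcon a ha)
  simp only [Finset.sum_const, smul_eq_mul] at h4
  omega

lemma mem_set_pow {M : Type*} [CommMonoid M] {s : Set M} {a : M} :
    ∀ {n : ℕ}, a ∈ s ^ n →
      ∃ m : Multiset M, Multiset.card m = n ∧ (∀ x ∈ m, x ∈ s) ∧ m.prod = a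
  | 0, h => by
    rw [pow_zero] at h
    exact ⟨0, rfl, fun x hx => absurd hx (Multiset.notMem_zero x),
      by simp [Set.mem_one.mp h]⟩
  | n + 1, h => by
    rw [pow_succ] at h
    obtain ⟨x, hx, y, hy, rfl⟩ := h
    obtain ⟨m, hcard, hmem, hprod⟩ := mem_set_pow hx
    refine ⟨y ::ₘ m, by simp [hcard], ?_, by rw [Multiset.prod_cons, hprod, mul_comm]⟩
    intro z hz
    rcases Multiset.mem_cons.mp hz with rfl | hz
    exacts [hy, hmem z hz]

lemma pow_le_span_pow (t : Finset R) (q k : ℕ) (hk : t.card * (q - 1) + 1 ≤ k) :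
    (Ideal.span (t : Set R)) ^ k ≤ Ideal.span ((fun a => a ^ q) '' (t : Set R)) := by
  classical
  rw [Ideal.span, Submodule.span_pow, Submodule.span_le]
  intro a ha
  obtain ⟨m, hcard, hmem, rfl⟩ := mem_set_pow ha
  obtain ⟨b, hbt, hbq⟩ := exists_count_ge t m hmem q (by omega)
  have hrep : Multiset.replicate q b ≤ m := Multiset.le_count_iff_replicate_le.mp hbq
  rw [show m = m - Multiset.replicate q b + Multiset.replicate q b from
    (tsub_add_cancel_of_le hrep).symm, Multiset.prod_add, Multiset.prod_replicate]
  exact Ideal.mul_mem_left _ _ (Ideal.subset_span ⟨b, hbt, rfl⟩)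

lemma key_lemma [IsNoetherianRing R] (p : ℕ) (I P : Ideal R) :
    ∃ c : ℕ, 0 < c ∧ (P ∈ I.minimalPrimes → ∀ e : ℕ, ∀ x ∈ P ^ (c * p ^ e),
      1 ≤ p ^ e →
      ∃ s ∉ P, s * x ∈ Ideal.span ((fun a => a ^ (p ^ e)) '' (I : Set R))) := by
  classical
  by_cases hmin : P ∈ I.minimalPrimes
  · have hP : P.IsPrime := hmin.1.1
    obtain ⟨m, hm⟩ := Ideal.exists_pow_le_of_le_radical_of_fg (le_radical_satAt hmin)
      (IsNoetherian.noetherian P)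
    have hm' : P ^ (m + 1) ≤ satAt I P hP :=
      le_trans (Ideal.pow_le_pow_right (Nat.le_succ m)) hm
    obtain ⟨t, ht⟩ := (IsNoetherian.noetherian (P ^ (m + 1)) : (P ^ (m + 1)).FG)
    set N := t.card with hN
    refine ⟨(m + 1) * (N + 1), by positivity, fun _ e x hx hq => ?_⟩
    set q := p ^ e with hqdef
    -- x ∈ (span t)^((N+1)*q)
    have hx2 : x ∈ (Ideal.span (t : Set R)) ^ ((N + 1) * q) := by
      show x ∈ (Submodule.span R (t : Set R)) ^ ((N + 1) * q)
      rw [ht]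
      have : P ^ ((m + 1) * (N + 1) * q) = (P ^ (m + 1)) ^ ((N + 1) * q) := by
        rw [← pow_mul, mul_assoc]
      rw [← this]
      exact hx
    have hx3 : x ∈ Ideal.span ((fun a => a ^ q) '' (t : Set R)) := by
      refine pow_le_span_pow t q ((N + 1) * q) ?_ hx2
      have h1 : t.card * (q - 1) ≤ t.card * q := Nat.mul_le_mul_left _ (Nat.sub_le q 1)
      have h2 : (N + 1) * q = t.card * q + q := by rw [hN]; ring
      omega
    -- choose multipliers
    have hsat : ∀ y : R, ∃ s : R, y ∈ t → s ∉ P ∧ s * y ∈ I := by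
      intro y
      by_cases hy : y ∈ t
      · have hyP : y ∈ P ^ (m + 1) := by rw [← ht]; exact Submodule.subset_span hy
        obtain ⟨s, hs, hsy⟩ := hm' hyP
        exact ⟨s, fun _ => ⟨hs, hsy⟩⟩
      · exact ⟨1, fun h => absurd h hy⟩
    choose f hf using hsat
    set S : R := ∏ y ∈ t, f y ^ q with hS
    have hSP : S ∉ P := by
      have : S ∈ P.primeCompl :=
        Submonoid.prod_mem _ fun y hy => Submonoid.pow_mem _ ((hf y hy).1) q
      exact this
    refine ⟨S, hSP, ?_⟩
    -- span induction
    have : ∀ z ∈ Ideal.span ((fun a => a ^ q) '' (t : Set R)),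
        S * z ∈ Ideal.span ((fun a => a ^ q) '' (I : Set R)) := by
      intro z hz
      induction hz using Submodule.span_induction with
      | mem w hw =>
        obtain ⟨y, hyt, rfl⟩ := hw
        have hyt' : y ∈ t := hyt
        have : S * y ^ q = (∏ z ∈ t.erase y, f z ^ q) * (f y * y) ^ q := by
          rw [hS, ← Finset.mul_prod_erase _ _ hyt', mul_pow]
          ring
        rw [this]
        exact Ideal.mul_mem_left _ _
          (Ideal.subset_span ⟨f y * y, (hf y hyt').2, rfl⟩)
      | zero => simpa using Ideal.zero_mem _
      | add u v _ _ hu hv => rw [mul_add]; exact Ideal.add_mem _ hu hv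
      | smul r u _ hu =>
        rw [smul_eq_mul, show S * (r * u) = r * (S * u) by ring]
        exact Ideal.mul_mem_left _ _ hu
    exact this x hx3
  · exact ⟨1, one_pos, fun h => absurd h hmin⟩

end Aux

/-- For a Noetherian commutative ring `R` of prime characteristic `p` and an
ideal `I`, there is a positive integer `c` such that for every `q = p^e` and every prime `P`
minimal over `I`, the isolated primary component `Q = I^{[q]} R_P ∩ R` of the Frobenius power
`I^{[q]}` (whose elements are exactly those `x` with `s * x ∈ I^{[q]}` for some `s ∉ P`)
contains `P^(c*q)`. -/
theorem stmt0 {R : Type*} [CommRing R] [IsNoetherianRing R] (p : ℕ) (hp : p.Prime)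
    [CharP R p] (I : Ideal R) :
    ∃ c : ℕ, 0 < c ∧ ∀ e : ℕ, ∀ P ∈ I.minimalPrimes,
      ∀ x ∈ P ^ (c * p ^ e),
        ∃ s ∉ P, s * x ∈ Ideal.span ((fun a => a ^ (p ^ e)) '' (I : Set R)) := by
  classical
  have hfin : I.minimalPrimes.Finite := by
    rw [Ideal.minimalPrimes_eq_comap]
    exact (minimalPrimes.finite_of_isNoetherianRing (R ⧸ I)).image _
  choose f hf0 hf using fun P => key_lemma p I P
  set F := hfin.toFinset with hF
  refine ⟨max 1 (F.sup f), lt_of_lt_of_le one_pos (le_max_left _ _), ?_⟩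
  intro e P hP x hx
  have hle : f P ≤ max 1 (F.sup f) :=
    le_trans (Finset.le_sup (hfin.mem_toFinset.mpr hP)) (le_max_right _ _)
  have hx' : x ∈ P ^ (f P * p ^ e) :=
    Ideal.pow_le_pow_right (Nat.mul_le_mul_right _ hle) hx
  exact hf P hP e x hx' (Nat.one_le_iff_ne_zero.mpr (pow_ne_zero e hp.pos.ne'))
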